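/- The space U^p([a,b],W) of functions f : [a,b] → W with sup_{δ>0} δ^{p−1}TV(f,[a,b],δ) < ∞, equipped with the norm ‖f‖ = ‖f(a)‖_W + (sup_{δ>0} δ^{p−1} TV(f,[a,b],δ))^{1/p}, is complete: every Cauchy sequence in this norm converges in this norm to an element of U^p([a,b],W). -/

import Mathlib

open Set Filter Topology ENNReal

noncomputable def truncVar {E : Type*} [PseudoMetricSpace E] (f : ℝ → E) (a b δ : ℝ) : ℝ≥0∞ :=
  ⨆ (n : ℕ) (t : Fin (n + 1) → ℝ) (_ : StrictMono t) (_ : ∀ i, t i ∈ Set.Icc a b),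
    ENNReal.ofReal (∑ i : Fin n, max (dist (f (t i.succ)) (f (t i.castSucc)) - δ) 0)

def Regulated {E : Type*} [PseudoMetricSpace E] (f : ℝ → E) (a b : ℝ) : Prop :=
  (∀ t ∈ Set.Ico a b, ∃ L, Filter.Tendsto f (nhdsWithin t (Set.Ioi t)) (nhds L)) ∧
  (∀ t ∈ Set.Ioc a b, ∃ L, Filter.Tendsto f (nhdsWithin t (Set.Iio t)) (nhds L))

noncomputable def pTVsup {W : Type*} [NormedAddCommGroup W] (f : ℝ → W) (a b p : ℝ) : ℝ≥0∞ :=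
  ⨆ (δ : ℝ) (_ : 0 < δ), ENNReal.ofReal (δ ^ (p - 1)) * truncVar f a b δ

noncomputable def pTVnorm {W : Type*} [NormedAddCommGroup W] (f : ℝ → W) (a b p : ℝ) : ℝ≥0∞ :=
  pTVsup f a b p ^ (1 / p)

noncomputable def fullNorm {W : Type*} [NormedAddCommGroup W] (f : ℝ → W) (a b p : ℝ) : ℝ≥0∞ :=
  ENNReal.ofReal ‖f a‖ + pTVnorm f a b p

section AuxLemmas
variable {W : Type*} [NormedAddCommGroup W]

lemma sum_le_pTVsup (f : ℝ → W) (a b p : ℝ) {δ : ℝ} (hδ : 0 < δ) {n : ℕ}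
    (c : Fin (n + 1) → ℝ) (hmono : StrictMono c) (hmem : ∀ i, c i ∈ Set.Icc a b) :
    ENNReal.ofReal (δ ^ (p - 1)) *
      ENNReal.ofReal (∑ i : Fin n, max (dist (f (c i.succ)) (f (c i.castSucc)) - δ) 0)
      ≤ pTVsup f a b p := by
  refine le_trans (mul_le_mul_right ?_ _) (le_iSup_of_le δ (le_iSup_of_le hδ le_rfl))
  rw [truncVar]
  exact le_iSup_of_le n (le_iSup_of_le c (le_iSup_of_le hmono (le_iSup_of_le hmem le_rfl)))

lemma pTVsup_le_of (f : ℝ → W) (a b p : ℝ) {C : ℝ≥0∞}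
    (H : ∀ δ : ℝ, 0 < δ → ∀ n : ℕ, ∀ c : Fin (n + 1) → ℝ, StrictMono c →
      (∀ i, c i ∈ Set.Icc a b) →
      ENNReal.ofReal (δ ^ (p - 1)) *
        ENNReal.ofReal (∑ i : Fin n, max (dist (f (c i.succ)) (f (c i.castSucc)) - δ) 0) ≤ C) :
    pTVsup f a b p ≤ C := by
  refine iSup_le fun δ => iSup_le fun hδ => ?_
  rw [truncVar, ENNReal.mul_iSup]
  refine iSup_le fun n => ?_
  rw [ENNReal.mul_iSup]
  refine iSup_le fun c => ?_
  rw [ENNReal.mul_iSup]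
  refine iSup_le fun hm => ?_
  rw [ENNReal.mul_iSup]
  exact iSup_le fun hmem => H δ hδ n c hm hmem

lemma dist_le_pTVnorm (f : ℝ → W) (a b p : ℝ) (hp : 1 ≤ p) {t : ℝ} (ht : t ∈ Set.Icc a b) :
    ENNReal.ofReal (dist (f t) (f a)) ≤ 2 * pTVnorm f a b p := by
  have hp0 : p ≠ 0 := by linarith
  rcases eq_or_lt_of_le ht.1 with h | h
  · simp [← h]
  set d := dist (f t) (f a) with hd
  rcases le_or_gt d 0 with hd0 | hd0
  · have : d = 0 := le_antisymm hd0 dist_nonneg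
    simp [this]
  have hδ : 0 < d / 2 := by linarith
  have key := sum_le_pTVsup f a b p hδ (![a, t]) ?mono ?mem
  case mono =>
    intro i j hij
    fin_cases i <;> fin_cases j <;> simp_all
  case mem =>
    intro i
    have haa : a ∈ Set.Icc a b := ⟨le_refl a, le_trans h.le ht.2⟩
    fin_cases i
    · simpa using haa
    · simpa using ht
  have hsum : (∑ i : Fin 1, max (dist (f (![a, t] i.succ)) (f (![a, t] i.castSucc)) - d / 2) 0)
      = d / 2 := by
    simp only [Fin.sum_univ_one, Fin.succ_zero_eq_one, Fin.castSucc_zero,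
      Matrix.cons_val_one, Matrix.head_cons, Matrix.cons_val_zero, ← hd]
    rw [max_eq_left (by linarith)]
    ring
  rw [hsum] at key
  have key2 : ENNReal.ofReal (d / 2) ^ p ≤ pTVsup f a b p := by
    rw [ENNReal.ofReal_rpow_of_pos hδ]
    calc ENNReal.ofReal ((d / 2) ^ p)
        = ENNReal.ofReal ((d / 2) ^ (p - 1)) * ENNReal.ofReal (d / 2) := by
          rw [← ENNReal.ofReal_mul (Real.rpow_nonneg hδ.le _)]
          congr 1
          rw [show p = (p - 1) + 1 by ring, Real.rpow_add hδ, Real.rpow_one]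
          ring_nf
      _ ≤ pTVsup f a b p := key
  have key3 : ENNReal.ofReal (d / 2) ≤ pTVnorm f a b p := by
    have := ENNReal.rpow_le_rpow key2 (by positivity : (0:ℝ) ≤ 1 / p)
    rwa [← ENNReal.rpow_mul, mul_one_div, div_self hp0, ENNReal.rpow_one] at this
  calc ENNReal.ofReal d = 2 * ENNReal.ofReal (d / 2) := by
        rw [← ENNReal.ofReal_ofNat, ← ENNReal.ofReal_mul (by norm_num)]
        congr 1
        ring
    _ ≤ 2 * pTVnorm f a b p := mul_le_mul_right key3 _

lemma pTVsup_triangle (f u v : ℝ → W) (a b p : ℝ) (hp : 1 ≤ p)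
    (H : ∀ s t, dist (f s) (f t) ≤ dist (u s) (u t) + dist (v s) (v t)) :
    pTVsup f a b p ≤ ENNReal.ofReal (2 ^ (p - 1)) * (pTVsup u a b p + pTVsup v a b p) := by
  refine pTVsup_le_of f a b p fun δ hδ n c hm hmem => ?_
  have hδ2 : 0 < δ / 2 := by linarith
  have term : ∀ i : Fin n,
      max (dist (f (c i.succ)) (f (c i.castSucc)) - δ) 0
        ≤ max (dist (u (c i.succ)) (u (c i.castSucc)) - δ / 2) 0
          + max (dist (v (c i.succ)) (v (c i.castSucc)) - δ / 2) 0 := by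
    intro i
    have h1 := le_max_left (dist (u (c i.succ)) (u (c i.castSucc)) - δ / 2) 0
    have h2 := le_max_left (dist (v (c i.succ)) (v (c i.castSucc)) - δ / 2) 0
    have h3 := H (c i.succ) (c i.castSucc)
    have h4 := le_max_right (dist (u (c i.succ)) (u (c i.castSucc)) - δ / 2) 0
    have h5 := le_max_right (dist (v (c i.succ)) (v (c i.castSucc)) - δ / 2) 0
    apply max_le <;> linarith
  have hsum : (∑ i : Fin n, max (dist (f (c i.succ)) (f (c i.castSucc)) - δ) 0)
      ≤ (∑ i : Fin n, max (dist (u (c i.succ)) (u (c i.castSucc)) - δ / 2) 0)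
        + (∑ i : Fin n, max (dist (v (c i.succ)) (v (c i.castSucc)) - δ / 2) 0) := by
    rw [← Finset.sum_add_distrib]
    exact Finset.sum_le_sum fun i _ => term i
  have hnn : ∀ (g : ℝ → W) (ρ : ℝ),
      (0:ℝ) ≤ ∑ i : Fin n, max (dist (g (c i.succ)) (g (c i.castSucc)) - ρ) 0 :=
    fun g ρ => Finset.sum_nonneg fun i _ => le_max_right _ _
  have hpow : ENNReal.ofReal (δ ^ (p - 1))
      = ENNReal.ofReal (2 ^ (p - 1)) * ENNReal.ofReal ((δ / 2) ^ (p - 1)) := by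
    rw [← ENNReal.ofReal_mul (by positivity), ← Real.mul_rpow (by norm_num) hδ2.le,
      show (2:ℝ) * (δ / 2) = δ by ring]
  calc ENNReal.ofReal (δ ^ (p - 1)) *
        ENNReal.ofReal (∑ i : Fin n, max (dist (f (c i.succ)) (f (c i.castSucc)) - δ) 0)
      ≤ ENNReal.ofReal (2 ^ (p - 1)) * ENNReal.ofReal ((δ / 2) ^ (p - 1)) *
        (ENNReal.ofReal (∑ i : Fin n, max (dist (u (c i.succ)) (u (c i.castSucc)) - δ / 2) 0)
          + ENNReal.ofReal (∑ i : Fin n, max (dist (v (c i.succ)) (v (c i.castSucc)) - δ / 2) 0)) := by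
        rw [← hpow]
        refine mul_le_mul_right ?_ _
        rw [← ENNReal.ofReal_add (hnn u (δ/2)) (hnn v (δ/2))]
        exact ENNReal.ofReal_le_ofReal hsum
    _ ≤ ENNReal.ofReal (2 ^ (p - 1)) * (pTVsup u a b p + pTVsup v a b p) := by
        rw [mul_assoc, mul_add]
        refine mul_le_mul_right (add_le_add ?_ ?_) _
        · exact sum_le_pTVsup u a b p hδ2 c hm hmem
        · exact sum_le_pTVsup v a b p hδ2 c hm hmem

end AuxLemmas

theorem stmt_15 {W : Type*} [NormedAddCommGroup W] [NormedSpace ℝ W] [CompleteSpace W]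
    (a b p : ℝ) (hab : a < b) (hp : 1 ≤ p) (f : ℕ → ℝ → W)
    (hfin : ∀ n, fullNorm (f n) a b p < ⊤)
    (hcau : ∀ ε : ℝ≥0∞, 0 < ε → ∃ N : ℕ, ∀ m ≥ N, ∀ n ≥ N,
      fullNorm (fun t => f m t - f n t) a b p < ε) :
    ∃ g : ℝ → W, fullNorm g a b p < ⊤ ∧
      Filter.Tendsto (fun n => fullNorm (fun t => f n t - g t) a b p)
        Filter.atTop (nhds 0) := by
  have hp0 : p ≠ 0 := by linarith
  have ha_mem : a ∈ Set.Icc a b := ⟨le_refl a, hab.le⟩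
  -- sup bound: values controlled by fullNorm
  have bound1 : ∀ (h : ℝ → W) (t : ℝ), t ∈ Set.Icc a b →
      ENNReal.ofReal ‖h t‖ ≤ 3 * fullNorm h a b p := by
    intro h t ht
    have h1 : ENNReal.ofReal (dist (h t) (h a)) ≤ 2 * pTVnorm h a b p :=
      dist_le_pTVnorm h a b p hp ht
    have h2 : ‖h t‖ ≤ ‖h a‖ + dist (h t) (h a) := by
      rw [dist_eq_norm]
      have := norm_sub_le (h t - h a) (-(h a))
      simp only [sub_neg_eq_add, sub_add_cancel] at this
      calc ‖h t‖ ≤ ‖h t - h a‖ + ‖h a‖ := by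
            simpa using norm_add_le (h t - h a) (h a)
        _ = ‖h a‖ + ‖h t - h a‖ := by ring
    calc ENNReal.ofReal ‖h t‖ ≤ ENNReal.ofReal (‖h a‖ + dist (h t) (h a)) :=
          ENNReal.ofReal_le_ofReal h2
      _ = ENNReal.ofReal ‖h a‖ + ENNReal.ofReal (dist (h t) (h a)) :=
          ENNReal.ofReal_add (norm_nonneg _) dist_nonneg
      _ ≤ fullNorm h a b p + 2 * pTVnorm h a b p := add_le_add le_self_add h1
      _ ≤ fullNorm h a b p + 2 * fullNorm h a b p :=
          add_le_add_right (mul_le_mul_right le_add_self _) _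
      _ = 3 * fullNorm h a b p := by ring
  -- pointwise Cauchy
  have hcauchy : ∀ t ∈ Set.Icc a b, CauchySeq (fun m => f m t) := by
    intro t ht
    rw [Metric.cauchySeq_iff]
    intro ε hε
    obtain ⟨N, hN⟩ := hcau (ENNReal.ofReal (ε / 4)) (by simp [ENNReal.ofReal_pos]; linarith)
    refine ⟨N, fun m hm n hn => ?_⟩
    have h1 := hN m hm n hn
    have h2 : ENNReal.ofReal (dist (f m t) (f n t))
        ≤ 3 * fullNorm (fun s => f m s - f n s) a b p := by
      rw [dist_eq_norm]
      exact bound1 (fun s => f m s - f n s) t ht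
    have h3 : (3 : ℝ≥0∞) * fullNorm (fun s => f m s - f n s) a b p
        < 3 * ENNReal.ofReal (ε / 4) := by
      rw [ENNReal.mul_lt_mul_iff_right (by norm_num) (by norm_num)]
      exact h1
    have h4 : (3 : ℝ≥0∞) * ENNReal.ofReal (ε / 4) ≤ ENNReal.ofReal ε := by
      rw [← ENNReal.ofReal_ofNat, ← ENNReal.ofReal_mul (by norm_num)]
      refine ENNReal.ofReal_le_ofReal ?_
      show (3:ℝ) * (ε / 4) ≤ ε
      linarith
    have := lt_of_le_of_lt h2 (lt_of_lt_of_le h3 h4)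
    rwa [ENNReal.ofReal_lt_ofReal_iff_of_nonneg dist_nonneg] at this
  set g : ℝ → W := fun t => limUnder atTop (fun m => f m t) with hgdef
  have hg : ∀ t ∈ Set.Icc a b, Tendsto (fun m => f m t) atTop (nhds (g t)) := by
    intro t ht
    obtain ⟨l, hl⟩ := cauchySeq_tendsto_of_complete (hcauchy t ht)
    rwa [show g t = l from hl.limUnder_eq]
  -- main estimate
  have main : ∀ ε : ℝ≥0∞, 0 < ε → ε ≠ ⊤ → ∃ N, ∀ n ≥ N,
      fullNorm (fun t => f n t - g t) a b p ≤ 2 * ε := by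
    intro ε hε hεt
    obtain ⟨N, hN⟩ := hcau ε hε
    refine ⟨N, fun n hn => ?_⟩
    have parta : ENNReal.ofReal ‖f n a - g a‖ ≤ ε := by
      have htend : Tendsto (fun m => ENNReal.ofReal ‖f n a - f m a‖) atTop
          (nhds (ENNReal.ofReal ‖f n a - g a‖)) :=
        (ENNReal.continuous_ofReal.tendsto _).comp
          ((tendsto_const_nhds.sub (hg a ha_mem)).norm)
      refine le_of_tendsto htend ?_
      filter_upwards [eventually_ge_atTop N] with m hm
      have h1 := hN n hn m hm
      exact le_of_lt (lt_of_le_of_lt le_self_add h1)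
    have hsup : ∀ m ≥ N, pTVsup (fun t => f n t - f m t) a b p ≤ ε ^ p := by
      intro m hm
      have h1 := hN n hn m hm
      have h2 : pTVnorm (fun t => f n t - f m t) a b p ≤ ε := le_of_lt (lt_of_le_of_lt le_add_self h1)
      have h3 : pTVsup (fun t => f n t - f m t) a b p
          = pTVnorm (fun t => f n t - f m t) a b p ^ p := by
        rw [pTVnorm, ← ENNReal.rpow_mul, one_div, inv_mul_cancel₀ hp0, ENNReal.rpow_one]
      rw [h3]
      exact ENNReal.rpow_le_rpow h2 (by linarith)
    have hεp : ε ^ p ≠ ⊤ := (ENNReal.rpow_lt_top_of_nonneg (by linarith) hεt).ne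
    have partb : pTVsup (fun t => f n t - g t) a b p ≤ ε ^ p := by
      refine pTVsup_le_of _ a b p fun δ hδ k c hm hmem => ?_
      have hslim : Tendsto (fun m => ∑ i : Fin k,
          max (dist (f n (c i.succ) - f m (c i.succ)) (f n (c i.castSucc) - f m (c i.castSucc)) - δ) 0)
          atTop (nhds (∑ i : Fin k,
          max (dist (f n (c i.succ) - g (c i.succ)) (f n (c i.castSucc) - g (c i.castSucc)) - δ) 0)) := by
        refine tendsto_finset_sum _ fun i _ => ?_
        exact (((tendsto_const_nhds.sub (hg _ (hmem i.succ))).dist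
          (tendsto_const_nhds.sub (hg _ (hmem i.castSucc)))).sub_const δ).max tendsto_const_nhds
      have hbm : ∀ m ≥ N, δ ^ (p - 1) * (∑ i : Fin k,
          max (dist (f n (c i.succ) - f m (c i.succ)) (f n (c i.castSucc) - f m (c i.castSucc)) - δ) 0)
          ≤ (ε ^ p).toReal := by
        intro m hm'
        have h1 := sum_le_pTVsup (fun t => f n t - f m t) a b p hδ c hm hmem
        have h2 := le_trans h1 (hsup m hm')
        rw [← ENNReal.ofReal_mul (Real.rpow_nonneg hδ.le _)] at h2
        exact (ENNReal.ofReal_le_iff_le_toReal hεp).mp h2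
      have hlim : δ ^ (p - 1) * (∑ i : Fin k,
          max (dist (f n (c i.succ) - g (c i.succ)) (f n (c i.castSucc) - g (c i.castSucc)) - δ) 0)
          ≤ (ε ^ p).toReal := by
        refine le_of_tendsto (hslim.const_mul (δ ^ (p - 1))) ?_
        filter_upwards [eventually_ge_atTop N] with m hm'
        exact hbm m hm'
      calc ENNReal.ofReal (δ ^ (p - 1)) * ENNReal.ofReal (∑ i : Fin k,
            max (dist ((fun t => f n t - g t) (c i.succ)) ((fun t => f n t - g t) (c i.castSucc)) - δ) 0)
          = ENNReal.ofReal (δ ^ (p - 1) * ∑ i : Fin k,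
            max (dist (f n (c i.succ) - g (c i.succ)) (f n (c i.castSucc) - g (c i.castSucc)) - δ) 0) := by
            rw [ENNReal.ofReal_mul (Real.rpow_nonneg hδ.le _)]
        _ ≤ ENNReal.ofReal ((ε ^ p).toReal) := ENNReal.ofReal_le_ofReal hlim
        _ = ε ^ p := ENNReal.ofReal_toReal hεp
    have partb' : pTVnorm (fun t => f n t - g t) a b p ≤ ε := by
      have := ENNReal.rpow_le_rpow partb (by positivity : (0:ℝ) ≤ 1 / p)
      rw [← ENNReal.rpow_mul, mul_one_div, div_self hp0, ENNReal.rpow_one] at this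
      rw [pTVnorm]
      exact this
    calc fullNorm (fun t => f n t - g t) a b p
        = ENNReal.ofReal ‖f n a - g a‖ + pTVnorm (fun t => f n t - g t) a b p := rfl
      _ ≤ ε + ε := add_le_add parta partb'
      _ = 2 * ε := (two_mul ε).symm
  -- finiteness of fullNorm g
  obtain ⟨N₁, hN₁⟩ := main 1 one_pos one_ne_top
  have hfg : fullNorm g a b p < ⊤ := by
    have h1 : pTVsup (fun t => f N₁ t - g t) a b p < ⊤ := by
      have h2 := hN₁ N₁ (le_refl N₁)
      have h3 : pTVnorm (fun t => f N₁ t - g t) a b p < ⊤ :=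
        lt_of_le_of_lt (le_trans le_add_self h2) (by norm_num)
      by_contra h4
      rw [not_lt, top_le_iff] at h4
      rw [pTVnorm, h4, ENNReal.top_rpow_of_pos (by positivity)] at h3
      exact (lt_irrefl _ h3).elim
    have h5 : pTVsup (f N₁) a b p < ⊤ := by
      have h6 : pTVnorm (f N₁) a b p < ⊤ := lt_of_le_of_lt le_add_self (hfin N₁)
      by_contra h4
      rw [not_lt, top_le_iff] at h4
      rw [pTVnorm, h4, ENNReal.top_rpow_of_pos (by positivity)] at h6
      exact (lt_irrefl _ h6).elim
    have htri : pTVsup g a b p ≤ ENNReal.ofReal (2 ^ (p - 1)) *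
        (pTVsup (f N₁) a b p + pTVsup (fun t => f N₁ t - g t) a b p) := by
      refine pTVsup_triangle g (f N₁) (fun t => f N₁ t - g t) a b p hp fun s t => ?_
      simp only [dist_eq_norm]
      have heq : g s - g t = (f N₁ s - f N₁ t) - ((f N₁ s - g s) - (f N₁ t - g t)) := by abel
      rw [heq]
      exact norm_sub_le _ _
    have h7 : pTVsup g a b p < ⊤ :=
      lt_of_le_of_lt htri (ENNReal.mul_lt_top ENNReal.ofReal_lt_top (ENNReal.add_lt_top.mpr ⟨h5, h1⟩))
    rw [fullNorm]
    refine ENNReal.add_lt_top.mpr ⟨ENNReal.ofReal_lt_top, ?_⟩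
    rw [pTVnorm]
    exact ENNReal.rpow_lt_top_of_nonneg (by positivity) h7.ne
  refine ⟨g, hfg, ?_⟩
  rw [ENNReal.tendsto_atTop_zero]
  intro ε hε
  set ε' := min 1 ε / 2 with hε'def
  have hε'pos : 0 < ε' := ENNReal.div_pos (lt_min one_pos hε).ne' (by norm_num)
  have hε'le : ε' ≤ 1 := le_trans ENNReal.half_le_self (min_le_left _ _)
  have hε'top : ε' ≠ ⊤ := (lt_of_le_of_lt hε'le one_lt_top).ne
  obtain ⟨N, hN⟩ := main ε' hε'pos hε'top
  refine ⟨N, fun n hn => le_trans (hN n hn) ?_⟩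
  rw [hε'def, ENNReal.mul_div_cancel' (by norm_num) (by norm_num)]
  exact min_le_right _ _
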